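/- Let X be a topological group, G a Borel subgroup of X, and μ a probability measure concentrated on G with μ = μ₁ * μ₂ for probability measures μ₁, μ₂ on X. Then there exist shifts μ′_j = μ_j * E_{x_j} (degenerate distributions at points x_j ∈ X) such that μ = μ′₁ * μ′₂ and both μ′₁, μ′₂ are concentrated on G. -/

import Mathlib

open MeasureTheory

section Aux

variable {X : Type*} [TopologicalSpace X] [AddCommGroup X] [IsTopologicalAddGroup X]

private lemma aux_open_add_mem {U : Set X} (hU : IsOpen U) {n : X}
    (hn : n ∈ closure ({0} : Set X)) {x : X} (hx : x ∈ U) : x + n ∈ U := by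
  set O : Set X := (fun z => x + z) ⁻¹' U with hO
  have hOopen : IsOpen O := hU.preimage (continuous_const.add continuous_id)
  have hWopen : IsOpen ((fun z => n - z) ⁻¹' O) :=
    hOopen.preimage (continuous_const.sub continuous_id)
  have hnW : n ∈ (fun z => n - z) ⁻¹' O := by simpa [hO] using hx
  rcases mem_closure_iff.1 hn _ hWopen hnW with ⟨z, hz1, hz2⟩
  have hz0 : z = 0 := hz2
  subst hz0
  simpa [hO] using hz1

private lemma aux_neg_mem_closure {n : X} (hn : n ∈ closure ({0} : Set X)) :
    -n ∈ closure ({0} : Set X) := by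
  rw [mem_closure_iff] at hn ⊢
  intro O hO hnO
  have h1 : n ∈ (fun z => -z) ⁻¹' O := by simpa using hnO
  rcases hn _ (hO.preimage continuous_neg) h1 with ⟨z, hz1, hz2⟩
  have hz0 : z = 0 := hz2
  subst hz0
  exact ⟨0, by simpa using hz1, rfl⟩

variable [MeasurableSpace X] [BorelSpace X]

private lemma aux_sat {S : Set X} (hS : MeasurableSet S) {n : X}
    (hn : n ∈ closure ({0} : Set X)) : ∀ x, x + n ∈ S ↔ x ∈ S := by
  refine MeasurableSet.induction_on_open (C := fun S _ => ∀ x, (x + n ∈ S ↔ x ∈ S)) ?_ ?_ ?_ _ hS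
  · intro U hU x
    constructor
    · intro h
      have := aux_open_add_mem hU (aux_neg_mem_closure hn) h
      simpa using this
    · exact fun h => aux_open_add_mem hU hn h
  · intro t _ ht x
    simpa using (ht x).not
  · intro f _ _ hf x
    simp only [Set.mem_iUnion]
    exact exists_congr fun i => hf i x

/-- Convolution with a Dirac measure is a translation, in any topological abelian group
with its Borel σ-algebra (no second countability needed). -/
private lemma conv_dirac_eq (ν : Measure X) [SFinite ν] (d : X) :
    ν.conv (Measure.dirac d) = ν.map (· + d) := by
  classical
  set N₀ : Set X := closure ({0} : Set X) with hN₀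
  set r : X → X := fun z => if z - d ∈ N₀ then z - d else 0 with hr
  have hrmem : ∀ z, r z ∈ N₀ := by
    intro z
    by_cases h : z - d ∈ N₀
    · simp only [hr]; rw [if_pos h]; exact h
    · simp only [hr]; rw [if_neg h]; exact subset_closure (Set.mem_singleton 0)
  set h : X × X → X := fun p => p.1 + d + r p.2 with hh
  have hpre : ∀ S : Set X, MeasurableSet S →
      h ⁻¹' S = ((fun y => y + d) ⁻¹' S) ×ˢ (Set.univ : Set X) := by
    intro S hS
    ext p
    simp only [Set.mem_preimage, Set.mem_prod, Set.mem_univ, and_true, hh]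
    exact aux_sat hS (hrmem p.2) (p.1 + d)
  have hmeas : Measurable h := by
    intro S hS
    rw [hpre S hS]
    exact ((measurable_add_const d) hS).prod MeasurableSet.univ
  have hae : (fun p : X × X => p.1 + p.2) =ᵐ[ν.prod (Measure.dirac d)] h := by
    have hTmeas : MeasurableSet ((Set.univ : Set X) ×ˢ ((fun z => z - d) ⁻¹' N₀)ᶜ) :=
      MeasurableSet.univ.prod ((measurable_sub_const d) isClosed_closure.measurableSet).compl
    have hsub : {p : X × X | (fun p : X × X => p.1 + p.2) p ≠ h p} ⊆
        (Set.univ : Set X) ×ˢ ((fun z => z - d) ⁻¹' N₀)ᶜ := by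
      intro p hp
      refine ⟨Set.mem_univ _, fun hmem => hp ?_⟩
      show p.1 + p.2 = p.1 + d + r p.2
      have : r p.2 = p.2 - d := if_pos (show p.2 - d ∈ N₀ from hmem)
      rw [this]; abel
    have hzero : (ν.prod (Measure.dirac d))
        ((Set.univ : Set X) ×ˢ ((fun z => z - d) ⁻¹' N₀)ᶜ) = 0 := by
      rw [Measure.prod_prod]
      have : Measure.dirac d (((fun z => z - d) ⁻¹' N₀)ᶜ) = 0 := by
        rw [Measure.dirac_apply' _ ((measurable_sub_const d) isClosed_closure.measurableSet).compl]
        have : d ∈ (fun z => z - d) ⁻¹' N₀ := by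
          show d - d ∈ N₀
          rw [sub_self]
          exact subset_closure (Set.mem_singleton 0)
        simp [Set.indicator_apply, this, subset_closure (Set.mem_singleton (0 : X))]
      simp [this]
    exact measure_mono_null hsub hzero
  have hconvdef : ν.conv (Measure.dirac d) =
      Measure.map (fun p : X × X => p.1 + p.2) (ν.prod (Measure.dirac d)) := rfl
  rw [hconvdef, Measure.map_congr hae]
  ext S hS
  rw [Measure.map_apply hmeas hS, hpre S hS, Measure.prod_prod,
    Measure.map_apply (measurable_add_const d) hS]
  simp

end Aux

/-- If a probability measure `μ` concentrated on a Borel subgroup `G`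
of a topological group `X` decomposes as a convolution `μ = μ₁ ∗ μ₂`, then `μ₁, μ₂` can
be replaced by shifts `μ'ⱼ = μⱼ ∗ E_{xⱼ}` so that `μ = μ'₁ ∗ μ'₂` and both `μ'ⱼ` are
concentrated on `G`. -/
theorem shift_factors_into_subgroup {X : Type*} [TopologicalSpace X] [AddCommGroup X]
    [IsTopologicalAddGroup X] [MeasurableSpace X] [BorelSpace X]
    (G : AddSubgroup X) (hGmeas : MeasurableSet (G : Set X))
    (μ μ₁ μ₂ : Measure X) [IsProbabilityMeasure μ]
    [IsProbabilityMeasure μ₁] [IsProbabilityMeasure μ₂]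
    (hconv : μ = μ₁.conv μ₂) (hsupp : μ (G : Set X) = 1) :
    ∃ x₁ x₂ : X,
      μ = (μ₁.conv (Measure.dirac x₁)).conv (μ₂.conv (Measure.dirac x₂)) ∧
      (μ₁.conv (Measure.dirac x₁)) (G : Set X) = 1 ∧
      (μ₂.conv (Measure.dirac x₂)) (G : Set X) = 1 := by
  classical
  set f : X × X → X := fun p => p.1 + p.2 with hf_def
  set π : Measure (X × X) := μ₁.prod μ₂ with hπ_def
  have hconv' : μ = Measure.map f π := hconv
  -- f is a.e. measurable w.r.t. π
  have hfae : AEMeasurable f π := by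
    by_contra hc
    have h0 : μ = 0 := by rw [hconv']; exact Measure.map_of_not_aemeasurable hc
    have := measure_univ (μ := μ)
    rw [h0] at this
    simp at this
  set g : X × X → X := hfae.mk f with hg_def
  have hg : Measurable g := hfae.measurable_mk
  have hfg : f =ᵐ[π] g := hfae.ae_eq_mk
  set N : Set (X × X) := toMeasurable π {p | f p ≠ g p} with hN_def
  have hNmeas : MeasurableSet N := measurableSet_toMeasurable _ _
  have hNsub : {p : X × X | f p ≠ g p} ⊆ N := subset_toMeasurable _ _
  have hNnull : π N = 0 := by
    rw [hN_def, measure_toMeasurable]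
    exact hfg
  have hW : MeasurableSet (g ⁻¹' (G : Set X)) := hg hGmeas
  have hμG : π (g ⁻¹' (G : Set X)) = 1 := by
    have h1 : μ (G : Set X) = π (g ⁻¹' (G : Set X)) := by
      rw [hconv', Measure.map_congr hfg, Measure.map_apply hg hGmeas]
    rw [← h1]; exact hsupp
  -- a.e. x, μ₂ {y | x + y ∈ G} = 1
  have hslice2 : ∀ᵐ x ∂μ₁, μ₂ (Prod.mk x ⁻¹' (g ⁻¹' (G : Set X))) = 1 := by
    have hint : ∫⁻ x, μ₂ (Prod.mk x ⁻¹' (g ⁻¹' (G : Set X))) ∂μ₁ = 1 := by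
      rw [← Measure.prod_apply hW]; exact hμG
    have := ae_eq_of_ae_le_of_lintegral_le
      (f := fun x => μ₂ (Prod.mk x ⁻¹' (g ⁻¹' (G : Set X)))) (g := fun _ => (1 : ENNReal))
      (ae_of_all _ fun _ => prob_le_one) (by rw [hint]; exact ENNReal.one_ne_top)
      aemeasurable_const (by rw [hint]; simp)
    exact this
  have hnull2 : ∀ᵐ x ∂μ₁, μ₂ (Prod.mk x ⁻¹' N) = 0 := by
    refine (lintegral_eq_zero_iff (measurable_measure_prodMk_left hNmeas)).1 ?_
    rw [← Measure.prod_apply hNmeas]; exact hNnull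
  have h2 : ∀ᵐ x ∂μ₁, μ₂ ((fun y => x + y) ⁻¹' (G : Set X)) = 1 := by
    filter_upwards [hslice2, hnull2] with x hx1 hx2
    refine le_antisymm prob_le_one ?_
    have hsub : Prod.mk x ⁻¹' (g ⁻¹' (G : Set X)) \ Prod.mk x ⁻¹' N ⊆
        (fun y => x + y) ⁻¹' (G : Set X) := by
      rintro y ⟨hy1, hy2⟩
      have hfe : f (x, y) = g (x, y) := by
        by_contra hne
        exact hy2 (hNsub hne)
      show x + y ∈ (G : Set X)
      rw [show x + y = f (x, y) from rfl, hfe]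
      exact hy1
    calc (1 : ENNReal) = μ₂ (Prod.mk x ⁻¹' (g ⁻¹' (G : Set X)) \ Prod.mk x ⁻¹' N) := by
          rw [measure_diff_null hx2, hx1]
      _ ≤ μ₂ ((fun y => x + y) ⁻¹' (G : Set X)) := measure_mono hsub
  -- a.e. y, μ₁ {x | x + y ∈ G} = 1
  have hslice1 : ∀ᵐ y ∂μ₂, μ₁ ((fun x => (x, y)) ⁻¹' (g ⁻¹' (G : Set X))) = 1 := by
    have hint : ∫⁻ y, μ₁ ((fun x => (x, y)) ⁻¹' (g ⁻¹' (G : Set X))) ∂μ₂ = 1 := by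
      rw [← Measure.prod_apply_symm hW]; exact hμG
    have := ae_eq_of_ae_le_of_lintegral_le
      (f := fun y => μ₁ ((fun x => (x, y)) ⁻¹' (g ⁻¹' (G : Set X)))) (g := fun _ => (1 : ENNReal))
      (ae_of_all _ fun _ => prob_le_one) (by rw [hint]; exact ENNReal.one_ne_top)
      aemeasurable_const (by rw [hint]; simp)
    exact this
  have hnull1 : ∀ᵐ y ∂μ₂, μ₁ ((fun x => (x, y)) ⁻¹' N) = 0 := by
    refine (lintegral_eq_zero_iff (measurable_measure_prodMk_right hNmeas)).1 ?_
    rw [← Measure.prod_apply_symm hNmeas]; exact hNnull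
  have h1 : ∀ᵐ y ∂μ₂, μ₁ ((fun x => x + y) ⁻¹' (G : Set X)) = 1 := by
    filter_upwards [hslice1, hnull1] with y hy1 hy2
    refine le_antisymm prob_le_one ?_
    have hsub : (fun x => (x, y)) ⁻¹' (g ⁻¹' (G : Set X)) \ (fun x => (x, y)) ⁻¹' N ⊆
        (fun x => x + y) ⁻¹' (G : Set X) := by
      rintro x ⟨hx1, hx2⟩
      have hfe : f (x, y) = g (x, y) := by
        by_contra hne
        exact hx2 (hNsub hne)
      show x + y ∈ (G : Set X)
      rw [show x + y = f (x, y) from rfl, hfe]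
      exact hx1
    calc (1 : ENNReal) = μ₁ ((fun x => (x, y)) ⁻¹' (g ⁻¹' (G : Set X)) \ (fun x => (x, y)) ⁻¹' N)
          := by rw [measure_diff_null hy2, hy1]
      _ ≤ μ₁ ((fun x => x + y) ⁻¹' (G : Set X)) := measure_mono hsub
  -- choose the shift c
  haveI : (ae μ₂).NeBot := ae_neBot.2 (IsProbabilityMeasure.ne_zero μ₂)
  obtain ⟨c, hc⟩ := h1.exists
  -- choose x₀
  have hcmeas : MeasurableSet ((fun x => x + c) ⁻¹' (G : Set X)) :=
    (measurable_add_const c) hGmeas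
  have hcae : ∀ᵐ x ∂μ₁, x + c ∈ (G : Set X) := by
    have hcompl : μ₁ (((fun x => x + c) ⁻¹' (G : Set X))ᶜ) = 0 := by
      rw [measure_compl hcmeas (measure_ne_top _ _), measure_univ, hc, tsub_self]
    exact hcompl
  obtain ⟨x₀, hx₀1, hx₀2⟩ := (h2.and hcae).exists
  -- the shifted measures
  refine ⟨c, -c, ?_, ?_, ?_⟩
  · -- the convolution identity
    rw [conv_dirac_eq μ₁ c, conv_dirac_eq μ₂ (-c)]
    have hm1 : Measurable (fun x : X => x + c) := measurable_add_const c
    have hm2 : Measurable (fun x : X => x + (-c)) := measurable_add_const (-c)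
    haveI : IsProbabilityMeasure (μ₁.map (· + c)) :=
      Measure.isProbabilityMeasure_map hm1.aemeasurable
    haveI : IsProbabilityMeasure (μ₂.map (· + (-c))) :=
      Measure.isProbabilityMeasure_map hm2.aemeasurable
    have hprodmap : (μ₁.map (· + c)).prod (μ₂.map (· + (-c))) =
        Measure.map (Prod.map (fun x : X => x + c) (fun x : X => x + (-c))) π :=
      Measure.map_prod_map _ _ hm1 hm2
    set T : X × X → X × X := Prod.map (fun x : X => x + c) (fun x : X => x + (-c)) with hT_def
    have hTmeas : Measurable T := hm1.prodMap hm2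
    set T' : X × X → X × X := fun p => (p.1 - c, p.2 + c) with hT'_def
    have hT'meas : Measurable T' :=
      (measurable_sub_const c).comp measurable_fst |>.prodMk
        ((measurable_add_const c).comp measurable_snd)
    have hT'T : ∀ p : X × X, T' (T p) = p := by
      intro p
      simp [hT_def, hT'_def, Prod.map]
    set h₃ : X × X → X := g ∘ T' with hh₃_def
    have hh₃meas : Measurable h₃ := hg.comp hT'meas
    have hfh₃ : f =ᵐ[Measure.map T π] h₃ := by
      have hsub : {p : X × X | f p ≠ h₃ p} ⊆ T' ⁻¹' N := by
        intro p hp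
        by_contra hmem
        apply hp
        have hfeq : f (T' p) = g (T' p) := by
          by_contra hne
          exact hmem (hNsub hne)
        have : f (T' p) = f p := by
          simp only [hf_def, hT'_def]
          abel
        rw [hh₃_def]
        show f p = g (T' p)
        rw [← hfeq, this]
      have hzero : Measure.map T π (T' ⁻¹' N) = 0 := by
        rw [Measure.map_apply hTmeas (hT'meas hNmeas)]
        have : T ⁻¹' (T' ⁻¹' N) = N := by
          ext p
          simp [Set.mem_preimage, hT'T p]
        rw [this]
        exact hNnull
      exact measure_mono_null hsub hzero
    have hstep : ((μ₁.map (· + c)).conv (μ₂.map (· + (-c)))) = μ := by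
      have hconvdef : ((μ₁.map (· + c)).conv (μ₂.map (· + (-c)))) =
          Measure.map f ((μ₁.map (· + c)).prod (μ₂.map (· + (-c)))) := rfl
      rw [hconvdef, hprodmap, Measure.map_congr hfh₃, hh₃_def,
        Measure.map_map (hg.comp hT'meas) hTmeas]
      have hcomp : (g ∘ T') ∘ T = g := by
        funext p
        simp only [Function.comp_apply]
        rw [hT'T p]
      rw [hcomp, ← Measure.map_congr hfg, ← hconv']
    exact hstep.symm
  · rw [conv_dirac_eq μ₁ c, Measure.map_apply (measurable_add_const c) hGmeas]
    exact hc
  · rw [conv_dirac_eq μ₂ (-c), Measure.map_apply (measurable_add_const (-c)) hGmeas]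
    have hseteq : (fun y : X => y + (-c)) ⁻¹' (G : Set X) =
        (fun y : X => x₀ + y) ⁻¹' (G : Set X) := by
      ext y
      simp only [Set.mem_preimage, SetLike.mem_coe]
      constructor
      · intro hy
        have : x₀ + y = (y + (-c)) + (x₀ + c) := by abel
        rw [this]
        exact G.add_mem hy hx₀2
      · intro hy
        have : y + (-c) = (x₀ + y) - (x₀ + c) := by abel
        rw [this]
        exact G.sub_mem hy hx₀2
    rw [hseteq]
    exact hx₀1
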